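/- If $\nu(A)\leq \int_{\mathbb{S}}\int_0^\infty \mathbf{1}_A(s\theta)\,s^{-1-\alpha}\bar{q}(s)\,ds\,\mu(d\theta)$ for all Borel $A\subset\mathbb{R}^d$, where $\bar{q}$ is bounded nonincreasing with $\bar{q}(s)\leq K\bar{q}(2s)$, and $\mu(B(\theta,r)\cap\mathbb{S})\leq c\,r^{\gamma-1}$ for all $\theta\in\mathbb{S}$, $r<1/2$, then there is a constant $C$ such that $\nu(B(0,r)^c)\leq C\,r^{-\alpha}\bar{q}(r)$ for all $r\in(0,\infty)$. -/

import Mathlib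

open MeasureTheory Set

/-- If `ν(A) ≤ ∫_𝕊 ∫_0^∞ 1_A(sθ) s^{-1-α} q(s) ds μ(dθ)` with `q`
bounded nonincreasing and doubling, and `μ(B(θ,r) ∩ 𝕊) ≤ c r^{γ-1}`, then
`ν(B(0,r)^c) ≤ C r^{-α} q(r)` for all `r > 0`. -/
theorem stmt1 (d : ℕ) (hd : 1 ≤ d) (α γ K c : ℝ)
    (hα : α ∈ Set.Ioo (0:ℝ) 2) (hγ : γ ∈ Set.Icc (1:ℝ) d) (hK : 1 ≤ K) (hc : 0 < c)
    (μ ν : Measure (EuclideanSpace ℝ (Fin d))) [IsFiniteMeasure μ]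
    (hμS : μ {x | ‖x‖ ≠ 1} = 0)
    (q : ℝ → ℝ)
    (hqpos : ∀ s, 0 < s → 0 < q s)
    (hqbdd : ∃ B : ℝ, ∀ s, 0 < s → q s ≤ B)
    (hqmono : ∀ s t : ℝ, 0 < s → s ≤ t → q t ≤ q s)
    (hqdbl : ∀ s, 0 < s → q s ≤ K * q (2 * s))
    (hν : ∀ A : Set (EuclideanSpace ℝ (Fin d)), MeasurableSet A →
      ν A ≤ ∫⁻ θ, (∫⁻ s in Ioi (0:ℝ),
        A.indicator (fun _ => ENNReal.ofReal (s ^ (-1 - α) * q s)) (s • θ)) ∂μ)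
    (hμ : ∀ θ : EuclideanSpace ℝ (Fin d), ‖θ‖ = 1 → ∀ r : ℝ, 0 < r → r < 1/2 →
      μ (Metric.ball θ r ∩ {x | ‖x‖ = 1}) ≤ ENNReal.ofReal (c * r ^ (γ - 1))) :
    ∃ C : ℝ, 0 < C ∧ ∀ r : ℝ, 0 < r →
      ν (Metric.ball (0 : EuclideanSpace ℝ (Fin d)) r)ᶜ
        ≤ ENNReal.ofReal (C * r ^ (-α) * q r) := by
  obtain ⟨hα0, hα2⟩ := hα
  set M := (μ Set.univ).toReal with hMdef
  have hM0 : 0 ≤ M := ENNReal.toReal_nonneg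
  refine ⟨(M + 1) / α, by positivity, ?_⟩
  intro r hr
  have hA : MeasurableSet (Metric.ball (0 : EuclideanSpace ℝ (Fin d)) r)ᶜ :=
    measurableSet_ball.compl
  have key := hν _ hA
  -- bound for the inner integral, for unit θ
  have inner : ∀ θ : EuclideanSpace ℝ (Fin d), ‖θ‖ = 1 →
      (∫⁻ s in Ioi (0:ℝ),
        ((Metric.ball (0 : EuclideanSpace ℝ (Fin d)) r)ᶜ).indicator
          (fun _ => ENNReal.ofReal (s ^ (-1 - α) * q s)) (s • θ))
        ≤ ENNReal.ofReal (r ^ (-α) / α * q r) := by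
    intro θ hθ
    have ptwise : ∀ s ∈ Ioi (0:ℝ),
        ((Metric.ball (0 : EuclideanSpace ℝ (Fin d)) r)ᶜ).indicator
          (fun _ => ENNReal.ofReal (s ^ (-1 - α) * q s)) (s • θ)
        ≤ (Ici r).indicator (fun s => ENNReal.ofReal (s ^ (-1 - α) * q r)) s := by
      intro s hs
      rcases le_or_gt r s with hsr | hsr
      · rw [Set.indicator_of_mem (mem_Ici.mpr hsr)]
        refine le_trans (Set.indicator_le_self' (fun _ _ => zero_le) _) ?_
        exact ENNReal.ofReal_le_ofReal
          (mul_le_mul_of_nonneg_left (hqmono r s hr hsr)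
            (Real.rpow_nonneg (le_of_lt hs) _))
      · have hmem : s • θ ∈ Metric.ball (0 : EuclideanSpace ℝ (Fin d)) r := by
          rw [mem_ball_zero_iff, norm_smul, hθ, mul_one]
          rwa [Real.norm_eq_abs, abs_of_pos hs]
        rw [Set.indicator_of_notMem (by simpa using hmem)]
        exact zero_le
    calc
      (∫⁻ s in Ioi (0:ℝ),
        ((Metric.ball (0 : EuclideanSpace ℝ (Fin d)) r)ᶜ).indicator
          (fun _ => ENNReal.ofReal (s ^ (-1 - α) * q s)) (s • θ))
          ≤ ∫⁻ s in Ioi (0:ℝ),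
              (Ici r).indicator (fun s => ENNReal.ofReal (s ^ (-1 - α) * q r)) s := by
            refine lintegral_mono_ae ?_
            exact (ae_restrict_iff' measurableSet_Ioi).2 (ae_of_all _ ptwise)
      _ ≤ ∫⁻ s, (Ici r).indicator (fun s => ENNReal.ofReal (s ^ (-1 - α) * q r)) s :=
            setLIntegral_le_lintegral _ _
      _ = ∫⁻ s in Ici r, ENNReal.ofReal (s ^ (-1 - α) * q r) :=
            lintegral_indicator measurableSet_Ici _
      _ = ∫⁻ s in Ioi r, ENNReal.ofReal (s ^ (-1 - α) * q r) := by
            rw [← MeasureTheory.restrict_Ioi_eq_restrict_Ici]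
      _ = ∫⁻ s in Ioi r, ENNReal.ofReal (s ^ (-1 - α)) * ENNReal.ofReal (q r) := by
            refine lintegral_congr fun s => ?_
            exact ENNReal.ofReal_mul' (le_of_lt (hqpos r hr))
      _ = (∫⁻ s in Ioi r, ENNReal.ofReal (s ^ (-1 - α))) * ENNReal.ofReal (q r) :=
            lintegral_mul_const' _ _ ENNReal.ofReal_ne_top
      _ = ENNReal.ofReal (r ^ (-α) / α) * ENNReal.ofReal (q r) := by
            have hlt : (-1 - α : ℝ) < -1 := by linarith
            have hint := integrableOn_Ioi_rpow_of_lt hlt hr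
            have hnn : 0 ≤ᵐ[volume.restrict (Ioi r)] fun s : ℝ => s ^ (-1 - α) := by
              filter_upwards [self_mem_ae_restrict measurableSet_Ioi] with s hs
              exact Real.rpow_nonneg (le_of_lt (hr.trans hs)) _
            rw [← ofReal_integral_eq_lintegral_ofReal hint hnn,
              integral_Ioi_rpow_of_lt hlt hr]
            congr 1
            rw [show (-1 - α) + 1 = -α by ring]
            rw [neg_div_neg_eq]
      _ = ENNReal.ofReal (r ^ (-α) / α * q r) := by
            rw [← ENNReal.ofReal_mul (by positivity)]
  -- integrate the constant bound over μ
  have step2 : ν (Metric.ball (0 : EuclideanSpace ℝ (Fin d)) r)ᶜ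
      ≤ μ Set.univ * ENNReal.ofReal (r ^ (-α) / α * q r) := by
    refine key.trans ?_
    have hae : ∀ᵐ θ ∂μ, ‖θ‖ = 1 := by
      rw [ae_iff]
      exact hμS
    calc
      (∫⁻ θ, (∫⁻ s in Ioi (0:ℝ),
          ((Metric.ball (0 : EuclideanSpace ℝ (Fin d)) r)ᶜ).indicator
            (fun _ => ENNReal.ofReal (s ^ (-1 - α) * q s)) (s • θ)) ∂μ)
          ≤ ∫⁻ _, ENNReal.ofReal (r ^ (-α) / α * q r) ∂μ := by
            refine lintegral_mono_ae ?_
            filter_upwards [hae] with θ hθ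
            exact inner θ hθ
      _ = μ Set.univ * ENNReal.ofReal (r ^ (-α) / α * q r) := by
            rw [lintegral_const, mul_comm]
  refine step2.trans ?_
  have hμuniv : μ Set.univ = ENNReal.ofReal M := by
    rw [hMdef, ENNReal.ofReal_toReal (measure_ne_top μ _)]
  rw [hμuniv, ← ENNReal.ofReal_mul hM0]
  refine ENNReal.ofReal_le_ofReal ?_
  have hrpow : (0:ℝ) ≤ r ^ (-α) := Real.rpow_nonneg hr.le _
  have hq : (0:ℝ) ≤ q r := (hqpos r hr).le
  have : M * (r ^ (-α) / α * q r) = M / α * r ^ (-α) * q r := by ring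
  rw [this]
  gcongr
  linarith
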